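/- Given a CGS-SPC G and its corresponding CGS-EPC G′, for every joint memoryless strategy σ′_C of a coalition C ⊆ N in G′ there exists a joint memoryless strategy σ_C in G such that for all canonical states s′ of G′, Π(out(s′, σ′_C)) = out(s′ ∩ Φ, σ_C), where Π maps each G′-path λ′ to the G-path λ with λ[k] = λ′[2k] ∩ Φ. -/
import Mathlib


open Set
open scoped Classical

structure CGS (Agent : Type) (Atom : Type) where
  ctrl : Agent → Set Atom
  d : Agent → Set Atom → Set (Set Atom)
  trans : Set Atom → (Agent → Set Atom) → Set Atom

namespace CGS

variable {Agent Atom : Type}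

/-- Well-formedness: nonempty protocol, and actions only use controlled atoms. -/
def WF (G : CGS Agent Atom) : Prop :=
  (∀ i s, (G.d i s).Nonempty) ∧ (∀ i s a, a ∈ G.d i s → a ⊆ G.ctrl i)

/-- Exclusive propositional control: disjoint, complete, and the transition is union. -/
def IsEPC (G : CGS Agent Atom) : Prop :=
  Pairwise (fun i j => Disjoint (G.ctrl i) (G.ctrl j)) ∧
  (⋃ i, G.ctrl i) = Set.univ ∧
  ∀ s α, G.trans s α = ⋃ i, α i

def Act (G : CGS Agent Atom) (s : Set Atom) : Set (Agent → Set Atom) :=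
  {α | ∀ i, α i ∈ G.d i s}

def Succ (G : CGS Agent Atom) (s : Set Atom) : Set (Set Atom) :=
  {t | ∃ α ∈ G.Act s, G.trans s α = t}

def IsPath (G : CGS Agent Atom) (lam : ℕ → Set Atom) : Prop :=
  ∀ k, lam (k + 1) ∈ G.Succ (lam k)

def ValidStrat (G : CGS Agent Atom) (C : Set Agent)
    (σ : Agent → Set Atom → Set Atom) : Prop :=
  ∀ i ∈ C, ∀ s, σ i s ∈ G.d i s

def out (G : CGS Agent Atom) (C : Set Agent)
    (σ : Agent → Set Atom → Set Atom) (s : Set Atom) : Set (ℕ → Set Atom) :=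
  {lam | lam 0 = s ∧ ∀ k, ∃ α ∈ G.Act (lam k),
    (∀ i ∈ C, α i = σ i (lam k)) ∧ lam (k + 1) = G.trans (lam k) α}

end CGS

/-- ATL* (path) formulas. -/
inductive Form (Agent Atom : Type) : Type where
  | atom : Atom → Form Agent Atom
  | neg : Form Agent Atom → Form Agent Atom
  | disj : Form Agent Atom → Form Agent Atom → Form Agent Atom
  | next : Form Agent Atom → Form Agent Atom
  | untl : Form Agent Atom → Form Agent Atom → Form Agent Atom
  | coal : Set Agent → Form Agent Atom → Form Agent Atom

namespace Form

def size {Agent Atom : Type} : Form Agent Atom → ℕ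
  | atom _ => 1
  | neg φ => φ.size + 1
  | disj φ ψ => φ.size + ψ.size + 1
  | next φ => φ.size + 1
  | untl φ ψ => φ.size + ψ.size + 1
  | coal _ φ => φ.size + 1

end Form

/-- State formulas of ATL*. -/
inductive IsStateForm {Agent Atom : Type} : Form Agent Atom → Prop where
  | atom (p : Atom) : IsStateForm (.atom p)
  | neg {φ} : IsStateForm φ → IsStateForm (.neg φ)
  | disj {φ ψ} : IsStateForm φ → IsStateForm ψ → IsStateForm (.disj φ ψ)
  | coal (C : Set Agent) (φ : Form Agent Atom) : IsStateForm (.coal C φ)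

def shiftSeq {α : Type} (lam : ℕ → α) (n : ℕ) : ℕ → α := fun k => lam (k + n)

/-- Satisfaction of an ATL* path formula along a computation (memoryless strategies). -/
def psat {Agent Atom : Type} (G : CGS Agent Atom) :
    Form Agent Atom → (ℕ → Set Atom) → Prop
  | .atom p, lam => p ∈ lam 0
  | .neg φ, lam => ¬ psat G φ lam
  | .disj φ ψ, lam => psat G φ lam ∨ psat G ψ lam
  | .next φ, lam => psat G φ (shiftSeq lam 1)
  | .untl φ ψ, lam => ∃ n, psat G ψ (shiftSeq lam n) ∧ ∀ m < n, psat G φ (shiftSeq lam m)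
  | .coal C φ, lam => ∃ σ, G.ValidStrat C σ ∧ ∀ μ ∈ G.out C σ (lam 0), psat G φ μ

/-- Satisfaction of an ATL* state formula at a state. -/
def ssat {Agent Atom : Type} (G : CGS Agent Atom) (φ : Form Agent Atom)
    (s : Set Atom) : Prop :=
  psat G φ (fun _ => s)

/-- Atoms of the associated exclusive-control structure: Φ ∪ {turn} ∪ {c_{ip}}. -/
abbrev Atom2 (Agent Atom : Type) : Type := Atom ⊕ (Unit ⊕ Agent × Atom)

/-- Agents of the associated exclusive-control structure: N ∪ {*}. -/
abbrev Agent2 (Agent : Type) : Type := Agent ⊕ Unit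

def turnV {Agent Atom : Type} : Atom2 Agent Atom := Sum.inr (Sum.inl ())

def baseV {Agent Atom : Type} (p : Atom) : Atom2 Agent Atom := Sum.inl p

def cV {Agent Atom : Type} (i : Agent) (p : Atom) : Atom2 Agent Atom :=
  Sum.inr (Sum.inr (i, p))

/-- Restriction of a state of `G'` to the atoms of `G` (s' ∩ Φ). -/
def restr {Agent Atom : Type} (s' : Set (Atom2 Agent Atom)) : Set Atom :=
  {p | baseV (Agent := Agent) p ∈ s'}

/-- Canonical state: agrees with `s` on Φ, all other variables false. -/
def canonical {Agent Atom : Type} (s : Set Atom) : Set (Atom2 Agent Atom) :=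
  Sum.inl '' s

/-- Read off a `G`-joint action from the `c_{ip}` variables of a `G'`-state. -/
def readAct {Agent Atom : Type} (G : CGS Agent Atom) (s' : Set (Atom2 Agent Atom)) :
    Agent → Set Atom :=
  fun i => {p | p ∈ G.ctrl i ∧ cV i p ∈ s'}

/-- The CGS-EPC `G'` corresponding to a CGS-SPC `G` (Definition 5 of the paper). -/
noncomputable def epcOf {Agent Atom : Type} (G : CGS Agent Atom) :
    CGS (Agent2 Agent) (Atom2 Agent Atom) where
  ctrl := fun j =>
    match j with
    | Sum.inl i => {q | ∃ p ∈ G.ctrl i, q = cV i p}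
    | Sum.inr _ => insert turnV (Set.range (baseV (Agent := Agent) (Atom := Atom)))
  d := fun j s' =>
    match j with
    | Sum.inl i =>
        if turnV ∈ s' then {∅}
        else {a | ∃ α ∈ G.d i (restr s'), a = cV i '' α}
    | Sum.inr _ =>
        if turnV ∈ s' then {baseV '' G.trans (restr s') (readAct G s')}
        else {insert turnV (baseV '' restr s')}
  trans := fun _ α => ⋃ j, α j

/-- Joint `G'`-action (α'₁,…,α'ₙ,+turn) encoding a `G`-action α at state s'. -/
def encAct {Agent Atom : Type} (_G : CGS Agent Atom) (s' : Set (Atom2 Agent Atom))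
    (α : Agent → Set Atom) : Agent2 Agent → Set (Atom2 Agent Atom) :=
  fun j =>
    match j with
    | Sum.inl i => cV i '' α i
    | Sum.inr _ => insert turnV (baseV '' restr s')

/-- Joint `G'`-action (∅,…,∅, τ(s' ∩ Φ, α)) performing the aggregation. -/
def aggAct {Agent Atom : Type} (G : CGS Agent Atom) (s' : Set (Atom2 Agent Atom))
    (α : Agent → Set Atom) : Agent2 Agent → Set (Atom2 Agent Atom) :=
  fun j =>
    match j with
    | Sum.inl _ => ∅
    | Sum.inr _ => baseV '' G.trans (restr s') α

/-- Projection Π of a `G'`-path to a `G`-path: λ[k] = λ'[2k] ∩ Φ. -/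
def projPath {Agent Atom : Type} (lam' : ℕ → Set (Atom2 Agent Atom)) : ℕ → Set Atom :=
  fun k => restr (lam' (2 * k))

/-- Condition (†): λ[k] = λ'[2k] ∩ Φ = λ'[2k+1] ∩ Φ for all k. -/
def Corr {Agent Atom : Type} (lam : ℕ → Set Atom)
    (lam' : ℕ → Set (Atom2 Agent Atom)) : Prop :=
  ∀ k, restr (lam' (2 * k)) = lam k ∧ restr (lam' (2 * k + 1)) = lam k

/-- Canonical `G'`-path associated to a `G`-path. -/
def CanonPath {Agent Atom : Type} (G : CGS Agent Atom) (lam : ℕ → Set Atom)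
    (lam' : ℕ → Set (Atom2 Agent Atom)) : Prop :=
  (epcOf G).IsPath lam' ∧ lam' 0 = canonical (lam 0) ∧ Corr lam lam'

/-- The translation `tr`: replaces X by XX, commutes with everything else. -/
def trF {Agent Atom : Type} : Form Agent Atom → Form (Agent2 Agent) (Atom2 Agent Atom)
  | .atom p => .atom (baseV p)
  | .neg φ => .neg (trF φ)
  | .disj φ ψ => .disj (trF φ) (trF ψ)
  | .next φ => .next (.next (trF φ))
  | .untl φ ψ => .untl (trF φ) (trF ψ)
  | .coal C φ => .coal (Sum.inl '' C) (trF φ)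

section Helpers

variable {Agent Atom : Type}

lemma restr_canonical (s : Set Atom) : restr (Agent := Agent) (canonical s) = s := by
  ext p; simp [restr, canonical, baseV]

lemma turnV_not_mem_canonical (s : Set Atom) :
    turnV (Agent := Agent) (Atom := Atom) ∉ canonical s := by
  simp [turnV, canonical]

lemma restr_mid (t : Set Atom) (β : Agent → Set Atom) :
    restr ((⋃ i, cV i '' β i) ∪ insert turnV (baseV '' t)) = t := by
  ext p; simp [restr, baseV, turnV, cV]

lemma turnV_mem_mid (t : Set Atom) (β : Agent → Set Atom) :
    turnV ∈ (⋃ i, cV i '' β i) ∪ insert (turnV (Agent := Agent) (Atom := Atom)) (baseV '' t) := by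
  right; exact Set.mem_insert _ _

lemma readAct_mid (G : CGS Agent Atom) (t : Set Atom) (β : Agent → Set Atom)
    (hβ : ∀ i, β i ⊆ G.ctrl i) :
    readAct G ((⋃ i, cV i '' β i) ∪ insert turnV (baseV '' t)) = β := by
  funext i; ext p
  simp only [readAct, Set.mem_setOf_eq, Set.mem_union, Set.mem_iUnion, Set.mem_image,
    Set.mem_insert_iff, cV, turnV, baseV]
  constructor
  · rintro ⟨-, (⟨j, q, hq, he⟩ | (h | ⟨q, -, h⟩))⟩
    · obtain ⟨h1, h2⟩ := Prod.mk.injEq .. ▸ (Sum.inr.injEq .. ▸ (Sum.inr.injEq .. ▸ he))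
      exact h1 ▸ h2 ▸ hq
    · simp at h
    · simp at h
  · intro hp
    exact ⟨hβ i hp, Or.inl ⟨i, p, hp, rfl⟩⟩

lemma cV_image_inj (i : Agent) : Function.Injective (Set.image (cV (Atom := Atom) i)) :=
  Set.image_injective.2 (fun p q h => by simpa [cV] using h)

/-- Read-off of a valid strategy action at a canonical state. -/
lemma readoff_spec (G : CGS Agent Atom) (i : Agent) (s : Set Atom)
    (a : Set (Atom2 Agent Atom)) (ha : a ∈ (epcOf G).d (Sum.inl i) (canonical s)) :
    {p | cV i p ∈ a} ∈ G.d i s ∧ cV i '' {p | cV i p ∈ a} = a := by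
  simp only [epcOf, if_neg (turnV_not_mem_canonical s), Set.mem_setOf_eq,
    restr_canonical] at ha
  obtain ⟨β, hβ, rfl⟩ := ha
  have : {p | cV i p ∈ cV i '' β} = β := by
    ext p; simp [cV]
  rw [this]; exact ⟨hβ, rfl⟩

end Helpers
/-- Lemma 2.2: every joint strategy of `G'` is simulated by one of `G`,
for outcomes starting at canonical states. -/
theorem strategy_project_from_epcOf {Agent Atom : Type} (G : CGS Agent Atom)
    (hWF : G.WF) (C : Set Agent)
    (σ' : Agent2 Agent → Set (Atom2 Agent Atom) → Set (Atom2 Agent Atom))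
    (hσ' : (epcOf G).ValidStrat (Sum.inl '' C) σ') :
    ∃ σ : Agent → Set Atom → Set Atom,
      G.ValidStrat C σ ∧
      ∀ s : Set Atom,
        projPath '' ((epcOf G).out (Sum.inl '' C) σ' (canonical s)) =
          G.out C σ s := by
  classical
  have hU : ∀ (f : Unit → Set (Atom2 Agent Atom)), (⋃ x, f x) = f () :=
    fun f => iSup_unique f
  have hσmem : ∀ i ∈ C, ∀ s : Set Atom,
      {p | cV i p ∈ σ' (Sum.inl i) (canonical s)} ∈ G.d i s ∧
      cV i '' {p | cV i p ∈ σ' (Sum.inl i) (canonical s)} = σ' (Sum.inl i) (canonical s) := by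
    intro i hi s
    exact readoff_spec G i s _ (hσ' (Sum.inl i) ⟨i, hi, rfl⟩ (canonical s))
  refine ⟨fun i s => {p | cV i p ∈ σ' (Sum.inl i) (canonical s)},
    fun i hi s => (hσmem i hi s).1, fun s => ?_⟩
  apply Set.Subset.antisymm
  · -- forward: projections of outcomes in G' are outcomes in G
    rintro _ ⟨lam', hlam', rfl⟩
    obtain ⟨h0, hstep⟩ := hlam'
    have step : ∀ k, ∀ t : Set Atom, lam' (2*k) = canonical t →
        ∃ β, (∀ i, β i ∈ G.d i t) ∧
          (∀ i ∈ C, β i = {p | cV i p ∈ σ' (Sum.inl i) (canonical t)}) ∧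
          lam' (2*k+2) = canonical (G.trans t β) := by
      intro k t ht
      obtain ⟨α', hAct, hCo, heq1⟩ := hstep (2*k)
      obtain ⟨α'', hAct2, hCo2, heq2⟩ := hstep (2*k+1)
      have hstar : α' (Sum.inr ()) = insert turnV (baseV '' t) := by
        have h := hAct (Sum.inr ())
        simp only [epcOf, ht, if_neg (turnV_not_mem_canonical t), restr_canonical,
          Set.mem_singleton_iff] at h
        exact h
      have hag : ∀ i, ∃ β ∈ G.d i t, α' (Sum.inl i) = cV i '' β := by
        intro i
        have h := hAct (Sum.inl i)
        simp only [epcOf, ht, if_neg (turnV_not_mem_canonical t), restr_canonical,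
          Set.mem_setOf_eq] at h
        exact h
      choose β hβd hβeq using hag
      have hβctrl : ∀ i, β i ⊆ G.ctrl i := fun i => hWF.2 i t (β i) (hβd i)
      have hmid : lam' (2*k+1) = (⋃ i, cV i '' β i) ∪ insert turnV (baseV '' t) := by
        rw [heq1]
        show (⋃ j, α' j) = _
        rw [Set.iUnion_sum, hU, hstar]
        congr 1
        exact Set.iUnion_congr hβeq
      have hturn2 : turnV ∈ lam' (2*k+1) := by rw [hmid]; exact turnV_mem_mid t β
      have hstar2 : α'' (Sum.inr ()) = baseV '' G.trans t β := by
        have h := hAct2 (Sum.inr ())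
        simp only [epcOf, if_pos hturn2, Set.mem_singleton_iff] at h
        rw [h, hmid, restr_mid, readAct_mid G t β hβctrl]
      have hag2 : ∀ i, α'' (Sum.inl i) = ∅ := by
        intro i
        have h := hAct2 (Sum.inl i)
        simp only [epcOf, if_pos hturn2, Set.mem_singleton_iff] at h
        exact h
      have heq2' : lam' (2*k+2) = canonical (G.trans t β) := by
        have h : lam' (2*k+1+1) = (epcOf G).trans (lam' (2*k+1)) α'' := heq2
        rw [show 2*k+2 = 2*k+1+1 from rfl, h]
        show (⋃ j, α'' j) = _
        rw [Set.iUnion_sum, hU, hstar2]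
        simp only [hag2, Set.iUnion_empty, Set.empty_union]
        rfl
      refine ⟨β, hβd, ?_, heq2'⟩
      intro i hi
      have h1 : α' (Sum.inl i) = σ' (Sum.inl i) (canonical t) := by
        rw [← ht]; exact hCo (Sum.inl i) ⟨i, hi, rfl⟩
      have h2 := (hσmem i hi t).2
      apply cV_image_inj i
      rw [← hβeq i, h1, h2]
    have key : ∀ k, lam' (2*k) = canonical (projPath lam' k) := by
      intro k
      induction k with
      | zero =>
        have hp : projPath lam' 0 = s := by
          show restr (lam' (2*0)) = s
          rw [show 2*0 = 0 from rfl, h0, restr_canonical]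
        rw [hp, show 2*0 = 0 from rfl, h0]
      | succ n ih =>
        obtain ⟨β, hβ, hCo, heq⟩ := step n _ ih
        have hp : projPath lam' (n+1) = G.trans (projPath lam' n) β := by
          show restr (lam' (2*(n+1))) = _
          rw [show 2*(n+1) = 2*n+2 from by ring, heq, restr_canonical]
        rw [hp, show 2*(n+1) = 2*n+2 from by ring, heq]
    refine ⟨?_, fun k => ?_⟩
    · show restr (lam' (2*0)) = s
      rw [show 2*0 = 0 from rfl, h0, restr_canonical]
    · obtain ⟨β, hβ, hCo, heq⟩ := step k _ (key k)
      refine ⟨β, hβ, hCo, ?_⟩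
      show restr (lam' (2*(k+1))) = _
      rw [show 2*(k+1) = 2*k+2 from by ring, heq, restr_canonical]
  · -- backward: every outcome in G is the projection of an outcome in G'
    intro ν hν
    obtain ⟨h0, hstep⟩ := hν
    choose α hαAct hαC hαtr using hstep
    set lam' : ℕ → Set (Atom2 Agent Atom) := fun m =>
      if Even m then canonical (ν (m/2))
      else (⋃ i, cV i '' α (m/2) i) ∪ insert turnV (baseV '' ν (m/2)) with hlam'
    have heven : ∀ k, lam' (2*k) = canonical (ν k) := by
      intro k
      have h1 : Even (2*k) := even_two_mul k
      have h2 : 2*k/2 = k := by omega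
      simp [hlam', h1, h2]
    have hodd : ∀ k, lam' (2*k+1) = (⋃ i, cV i '' α k i) ∪ insert turnV (baseV '' ν k) := by
      intro k
      have h1 : ¬ Even (2*k+1) := by rw [Nat.even_iff]; omega
      have h2 : (2*k+1)/2 = k := by omega
      simp [hlam', h1, h2]
    have hαctrl : ∀ k i, α k i ⊆ G.ctrl i := fun k i => hWF.2 i (ν k) _ (hαAct k i)
    refine ⟨lam', ⟨?_, ?_⟩, ?_⟩
    · rw [show (0:ℕ) = 2*0 from rfl, heven 0, h0]
    · intro m
      rcases Nat.even_or_odd m with hm | hm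
      · obtain ⟨k, hk⟩ := hm
        have hk2 : m = 2*k := by omega
        subst hk2
        refine ⟨Sum.elim (fun i => cV i '' α k i)
          (fun _ => insert turnV (baseV '' ν k)), ?_, ?_, ?_⟩
        · intro j
          cases j with
          | inl i =>
            show cV i '' α k i ∈ (epcOf G).d (Sum.inl i) (lam' (2*k))
            rw [heven k]
            simp only [epcOf, if_neg (turnV_not_mem_canonical (ν k)), restr_canonical,
              Set.mem_setOf_eq]
            exact ⟨α k i, hαAct k i, rfl⟩
          | inr u =>
            show insert turnV (baseV '' ν k) ∈ (epcOf G).d (Sum.inr u) (lam' (2*k))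
            rw [heven k]
            simp only [epcOf, if_neg (turnV_not_mem_canonical (ν k)), restr_canonical,
              Set.mem_singleton_iff]
        · rintro _ ⟨i, hi, rfl⟩
          show cV i '' α k i = σ' (Sum.inl i) (lam' (2*k))
          rw [heven k, hαC k i hi]
          exact (hσmem i hi (ν k)).2
        · show lam' (2*k+1) = ⋃ j, _
          rw [hodd k, Set.iUnion_sum, hU]
          simp only [Sum.elim_inl, Sum.elim_inr]
      · obtain ⟨k, rfl⟩ := hm
        have hturn : turnV ∈ lam' (2*k+1) := by rw [hodd k]; exact turnV_mem_mid _ _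
        refine ⟨Sum.elim (fun _ => ∅)
          (fun _ => baseV '' G.trans (ν k) (α k)), ?_, ?_, ?_⟩
        · intro j
          cases j with
          | inl i =>
            show (∅ : Set (Atom2 Agent Atom)) ∈ (epcOf G).d (Sum.inl i) (lam' (2*k+1))
            simp only [epcOf, if_pos hturn, Set.mem_singleton_iff]
          | inr u =>
            show baseV '' G.trans (ν k) (α k) ∈ (epcOf G).d (Sum.inr u) (lam' (2*k+1))
            simp only [epcOf, if_pos hturn, Set.mem_singleton_iff]
            rw [hodd k, restr_mid, readAct_mid G _ _ (hαctrl k)]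
        · rintro _ ⟨i, hi, rfl⟩
          show (∅ : Set (Atom2 Agent Atom)) = σ' (Sum.inl i) (lam' (2*k+1))
          have h := hσ' (Sum.inl i) ⟨i, hi, rfl⟩ (lam' (2*k+1))
          simp only [epcOf, if_pos hturn, Set.mem_singleton_iff] at h
          exact h.symm
        · have h2 : lam' (2*k+1+1) = canonical (ν (k+1)) := heven (k+1)
          rw [h2, hαtr k]
          show canonical (G.trans (ν k) (α k)) = ⋃ j, _
          rw [Set.iUnion_sum, hU]
          simp only [Sum.elim_inl, Sum.elim_inr, Set.iUnion_empty, Set.empty_union]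
          rfl
    · funext k
      show restr (lam' (2*k)) = ν k
      rw [heven k, restr_canonical]
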